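/- Let X be a solid Banach lattice of real functions on a set Γ, given by an injective linear map T : X → (Γ → ℝ). If the norm of X is strictly convex (i.e. ‖x‖ = ‖y‖ = 1 and ‖x + y‖ = 2 imply x = y), then the norm is strictly monotone: for all x, y ∈ X such that |(T y)(γ)| ≤ |(T x)(γ)| for every γ ∈ Γ and |(T y)(β)| < |(T x)(β)| for some β ∈ Γ, one has ‖y‖ < ‖x‖. -/

import Mathlib

open Classical in
/-- The unit vector (indicator of `{γ}`) in the space of real functions on `Γ`. -/
noncomputable def eVec {Γ : Type*} (γ : Γ) : Γ → ℝ := fun δ => if δ = γ then 1 else 0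

/-- A solid Banach lattice of real functions on `Γ`, given by an injective linear map
`T : X → (Γ → ℝ)`: if the norm is strictly convex, then it is strictly monotone. -/
theorem strictlyConvex_implies_strictlyMonotone
    {Γ : Type*} {X : Type*} [NormedAddCommGroup X] [NormedSpace ℝ X] [CompleteSpace X]
    (T : X →ₗ[ℝ] (Γ → ℝ)) (hT : Function.Injective T)
    (hsolid : ∀ (x : X) (g : Γ → ℝ), (∀ γ, |g γ| ≤ |T x γ|) →
      ∃ y : X, T y = g ∧ ‖y‖ ≤ ‖x‖)
    (hunit : ∀ γ : Γ, ∃ e : X, T e = eVec γ ∧ ‖e‖ = 1)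
    (hSC : ∀ x y : X, ‖x‖ = 1 → ‖y‖ = 1 → ‖x + y‖ = 2 → x = y)
    (x y : X) (hle : ∀ γ, |T y γ| ≤ |T x γ|) (hlt : ∃ β, |T y β| < |T x β|) :
    ‖y‖ < ‖x‖ := by
  obtain ⟨β, hβ⟩ := hlt
  have hyx : ‖y‖ ≤ ‖x‖ := by
    obtain ⟨y', hy', hy'n⟩ := hsolid x (T y) hle
    rwa [hT hy'] at hy'n
  rcases hyx.lt_or_eq with h | hc
  · exact h
  exfalso
  have hx0 : (0:ℝ) < ‖x‖ := by
    rcases (norm_nonneg x).lt_or_eq with h | h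
    · exact h
    · have hx : x = 0 := norm_eq_zero.mp h.symm
      rw [hx, map_zero] at hβ
      simp at hβ
      exact absurd hβ (not_lt.mpr (abs_nonneg _))
  set c := ‖x‖ with hcdef
  -- z1 with T z1 = |T x|
  obtain ⟨z1, hz1, hz1n⟩ := hsolid x (fun γ => |T x γ|)
    (fun γ => by simp [abs_abs])
  -- z2 with T z2 = 2|T y| - |T x|
  obtain ⟨z2, hz2, hz2n⟩ := hsolid x (fun γ => 2 * |T y γ| - |T x γ|)
    (fun γ => by
      have h1 := hle γ
      have h2 := abs_nonneg (T y γ)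
      have h3 := abs_nonneg (T x γ)
      rw [abs_le]
      refine ⟨?_, ?_⟩ <;> linarith)
  -- T (z1 + z2) = fun γ => 2 * |T y γ|
  have hsum : T (z1 + z2) = fun γ => 2 * |T y γ| := by
    rw [map_add, hz1, hz2]
    funext γ
    dsimp only [Pi.add_apply]
    ring
  -- lower bound: ‖2 • y‖ ≤ ‖z1 + z2‖
  have hlb : 2 * ‖y‖ ≤ ‖z1 + z2‖ := by
    obtain ⟨u, hu, hun⟩ := hsolid (z1 + z2) (T ((2:ℝ) • y))
      (fun γ => by
        rw [hsum, map_smul]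
        simp [abs_mul, abs_abs])
    rw [hT hu] at hun
    rwa [norm_smul, Real.norm_ofNat] at hun
  rw [hc] at hlb
  have htri : ‖z1 + z2‖ ≤ ‖z1‖ + ‖z2‖ := norm_add_le _ _
  have hz1c : ‖z1‖ = c := le_antisymm hz1n (by linarith)
  have hz2c : ‖z2‖ = c := le_antisymm hz2n (by linarith)
  have hsumn : ‖z1 + z2‖ = 2 * c := le_antisymm (by linarith) hlb
  have hcne : c ≠ 0 := ne_of_gt hx0
  have heq : c⁻¹ • z1 = c⁻¹ • z2 := by
    apply hSC
    · rw [norm_smul, hz1c, Real.norm_eq_abs, abs_of_pos (inv_pos.mpr hx0),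
        inv_mul_cancel₀ hcne]
    · rw [norm_smul, hz2c, Real.norm_eq_abs, abs_of_pos (inv_pos.mpr hx0),
        inv_mul_cancel₀ hcne]
    · rw [← smul_add, norm_smul, hsumn, Real.norm_eq_abs,
        abs_of_pos (inv_pos.mpr hx0)]
      field_simp
  have hz12 : z1 = z2 := by
    have := congrArg (fun v => c • v) heq
    simpa [smul_smul, mul_inv_cancel₀ hcne] using this
  have := congrFun (hz1 ▸ hz2 ▸ congrArg T hz12) β
  have hxy : |T x β| = 2 * |T y β| - |T x β| := by
    rw [hz12] at hz1
    have := congrFun (hz1.symm.trans hz2) β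
    simpa using this
  linarith
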